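/- Let κ,ε>0, λ≥0, and M>0, and let ρ : [0,1] → ℝ be differentiable with continuous derivative ρ_x satisfying 0 < |ρ_x(x)| ≤ M on [0,1]. Let θ ∈ L²(0,1) and suppose u : [0,1] → ℝ satisfies Bu = θ, where u/ρ_x is four times continuously differentiable, u(0)=u(1)=0 and (u/ρ_x)''(0)=(u/ρ_x)''(1)=0. Then 0 ≤ ∫₀¹ θ u dx ≤ (M²/(M²+κ)) ∫₀¹ θ² dx; consequently ∫₀¹ θ² dx − ∫₀¹ θ u dx ≥ (κ/(M²+κ)) ∫₀¹ θ² dx > 0 whenever θ ≠ 0, i.e., the Hessian operator I − B^{-1} is positive definite. -/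

import Mathlib

open MeasureTheory Set intervalIntegral

/-- The operator `B` associated with the HV Hessian:
`Bv = (1/ρ_x)[ε (v/ρ_x)'''' − λ (v/ρ_x)'' + (v/ρ_x)(κ + ρ_x²)]`,
where `ρx` denotes the derivative `ρ_x`. -/
noncomputable def Bop (κ lam ε : ℝ) (ρx : ℝ → ℝ) (v : ℝ → ℝ) (x : ℝ) : ℝ :=
  (1 / ρx x) * (ε * iteratedDeriv 4 (fun y => v y / ρx y) x
    - lam * iteratedDeriv 2 (fun y => v y / ρx y) x
    + (v x / ρx x) * (κ + (ρx x) ^ 2))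

set_option maxHeartbeats 1000000

/-- Positive definiteness of the Hessian operator `I − B⁻¹`:
if `Bu = θ` (with the boundary conditions of `B`) and `0 < |ρ_x| ≤ M` on `[0,1]`,
then `0 ≤ ∫₀¹ θ u ≤ (M²/(M²+κ)) ∫₀¹ θ²`; consequently, whenever `θ ≠ 0` (in `L²(0,1)`),
`∫₀¹ θ² − ∫₀¹ θ u ≥ (κ/(M²+κ)) ∫₀¹ θ² > 0`. -/
theorem hessian_positive_definite
    (κ lam ε M : ℝ) (hκ : 0 < κ) (hlam : 0 ≤ lam) (hε : 0 < ε) (hM : 0 < M)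
    (ρ : ℝ → ℝ) (hρ : Differentiable ℝ ρ) (hρx : Continuous (deriv ρ))
    (hbnd : ∀ x ∈ Icc (0:ℝ) 1, 0 < |deriv ρ x| ∧ |deriv ρ x| ≤ M)
    (θ : ℝ → ℝ) (hθ : MemLp θ 2 (volume.restrict (Ioo (0:ℝ) 1)))
    (u : ℝ → ℝ) (hu : ContDiff ℝ 4 (fun x => u x / deriv ρ x))
    (hu0 : u 0 = 0) (hu1 : u 1 = 0)
    (hu''0 : iteratedDeriv 2 (fun x => u x / deriv ρ x) 0 = 0)
    (hu''1 : iteratedDeriv 2 (fun x => u x / deriv ρ x) 1 = 0)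
    (hBu : ∀ x ∈ Ioo (0:ℝ) 1, Bop κ lam ε (deriv ρ) u x = θ x) :
    (0 ≤ ∫ x in (0:ℝ)..1, θ x * u x) ∧
    ((∫ x in (0:ℝ)..1, θ x * u x)
        ≤ M ^ 2 / (M ^ 2 + κ) * ∫ x in (0:ℝ)..1, (θ x) ^ 2) ∧
    (¬ (θ =ᵐ[volume.restrict (Ioo (0:ℝ) 1)] 0) →
      (κ / (M ^ 2 + κ) * ∫ x in (0:ℝ)..1, (θ x) ^ 2)
          ≤ (∫ x in (0:ℝ)..1, (θ x) ^ 2) - (∫ x in (0:ℝ)..1, θ x * u x) ∧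
      0 < (∫ x in (0:ℝ)..1, (θ x) ^ 2) - (∫ x in (0:ℝ)..1, θ x * u x)) := by
  set r : ℝ → ℝ := deriv ρ with hr
  set w : ℝ → ℝ := fun x => u x / r x with hwdef
  set D1 : ℝ → ℝ := iteratedDeriv 1 w with hD1
  set D2 : ℝ → ℝ := iteratedDeriv 2 w with hD2
  set D3 : ℝ → ℝ := iteratedDeriv 3 w with hD3
  set D4 : ℝ → ℝ := iteratedDeriv 4 w with hD4
  have hw : ContDiff ℝ 4 w := hu
  have cw : Continuous w := hw.continuous
  have cD : ∀ n : ℕ, n ≤ 4 → Continuous (iteratedDeriv n w) := fun n hn =>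
    hw.continuous_iteratedDeriv n (by exact_mod_cast hn)
  have cD1 : Continuous D1 := cD 1 (by norm_num)
  have cD2 : Continuous D2 := cD 2 (by norm_num)
  have cD3 : Continuous D3 := cD 3 (by norm_num)
  have cD4 : Continuous D4 := cD 4 (by norm_num)
  have hDer : ∀ n : ℕ, n < 4 → ∀ x : ℝ,
      HasDerivAt (iteratedDeriv n w) (iteratedDeriv (n+1) w x) x := by
    intro n hn x
    rw [iteratedDeriv_succ]
    exact ((hw.differentiable_iteratedDeriv n (by exact_mod_cast hn)) x).hasDerivAt
  have hwD : ∀ x : ℝ, HasDerivAt w (D1 x) x := by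
    intro x
    have h := hDer 0 (by norm_num) x
    rwa [iteratedDeriv_zero] at h
  have w0 : w 0 = 0 := by simp [hwdef, hu0]
  have w1 : w 1 = 0 := by simp [hwdef, hu1]
  -- integration by parts
  have ii : ∀ f : ℝ → ℝ, Continuous f → IntervalIntegrable f volume 0 1 := fun f hf =>
    hf.intervalIntegrable 0 1
  have ibp1 : (∫ x in (0:ℝ)..1, w x * D4 x) = - ∫ x in (0:ℝ)..1, D1 x * D3 x := by
    have h := integral_mul_deriv_eq_deriv_mul
      (u := w) (v := D3) (u' := D1) (v' := D4) (a := (0:ℝ)) (b := 1)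
      (fun x _ => hwD x) (fun x _ => hDer 3 (by norm_num) x)
      (ii D1 cD1) (ii D4 cD4)
    rw [h, w0, w1]; ring
  have ibp2 : (∫ x in (0:ℝ)..1, D1 x * D3 x) = - ∫ x in (0:ℝ)..1, (D2 x)^2 := by
    have h := integral_mul_deriv_eq_deriv_mul
      (u := D1) (v := D2) (u' := D2) (v' := D3) (a := (0:ℝ)) (b := 1)
      (fun x _ => hDer 1 (by norm_num) x) (fun x _ => hDer 2 (by norm_num) x)
      (ii D2 cD2) (ii D3 cD3)
    rw [h, show D2 0 = 0 from hu''0, show D2 1 = 0 from hu''1]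
    simp [pow_two]
  have ibp3 : (∫ x in (0:ℝ)..1, w x * D2 x) = - ∫ x in (0:ℝ)..1, (D1 x)^2 := by
    have h := integral_mul_deriv_eq_deriv_mul
      (u := w) (v := D1) (u' := D1) (v' := D2) (a := (0:ℝ)) (b := 1)
      (fun x _ => hwD x) (fun x _ => hDer 1 (by norm_num) x)
      (ii D1 cD1) (ii D2 cD2)
    rw [h, w0, w1]
    simp [pow_two]
  have rne : ∀ x ∈ Icc (0:ℝ) 1, r x ≠ 0 := by
    intro x hx
    have := (hbnd x hx).1
    intro h; rw [h] at this; simp at this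
  -- pointwise identity on Ioo
  have hpt : ∀ x ∈ Ioo (0:ℝ) 1, θ x * u x
      = ε * (w x * D4 x) - lam * (w x * D2 x) + (κ + (r x)^2) * (w x)^2 := by
    intro x hx
    have hxI : x ∈ Icc (0:ℝ) 1 := Ioo_subset_Icc_self hx
    have hrx : r x ≠ 0 := rne x hxI
    have hθx : θ x = (1 / r x) * (ε * D4 x - lam * D2 x + (u x / r x) * (κ + (r x)^2)) :=
      (hBu x hx).symm
    rw [hθx, hwdef]
    field_simp
  -- convert interval integrals to set integrals over Ioo
  have conv : ∀ f : ℝ → ℝ, (∫ x in (0:ℝ)..1, f x) = ∫ x in Ioo (0:ℝ) 1, f x := by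
    intro f
    rw [intervalIntegral.integral_of_le zero_le_one, integral_Ioc_eq_integral_Ioo]
  set g : ℝ → ℝ := fun x => ε * (w x * D4 x) - lam * (w x * D2 x) + (κ + (r x)^2) * (w x)^2
    with hg
  have cg : Continuous g := by
    apply Continuous.add
    · exact ((continuous_const.mul (cw.mul cD4)).sub (continuous_const.mul (cw.mul cD2)))
    · exact (continuous_const.add (hρx.pow 2)).mul (cw.pow 2)
  have key : (∫ x in (0:ℝ)..1, θ x * u x) = ∫ x in (0:ℝ)..1, g x := by
    rw [conv (fun x => θ x * u x), conv g]
    exact setIntegral_congr_fun measurableSet_Ioo (fun x hx => hpt x hx)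
  have split : (∫ x in (0:ℝ)..1, g x)
      = ε * (∫ x in (0:ℝ)..1, w x * D4 x) - lam * (∫ x in (0:ℝ)..1, w x * D2 x)
        + ∫ x in (0:ℝ)..1, (κ + (r x)^2) * (w x)^2 := by
    simp only [hg]
    rw [intervalIntegral.integral_add (f := fun x => ε * (w x * D4 x) - lam * (w x * D2 x))
        (g := fun x => (κ + r x ^ 2) * w x ^ 2) (((ii _ (cw.mul cD4)).const_mul ε).sub
        ((ii _ (cw.mul cD2)).const_mul lam)) (ii _ ((continuous_const.add (hρx.pow 2)).mul (cw.pow 2)))]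
    rw [intervalIntegral.integral_sub (f := fun x => ε * (w x * D4 x))
        (g := fun x => lam * (w x * D2 x)) ((ii _ (cw.mul cD4)).const_mul ε)
        ((ii _ (cw.mul cD2)).const_mul lam)]
    rw [intervalIntegral.integral_const_mul, intervalIntegral.integral_const_mul]
  set P := ∫ x in (0:ℝ)..1, (D2 x)^2 with hP
  set Q := ∫ x in (0:ℝ)..1, (D1 x)^2 with hQ
  set R := ∫ x in (0:ℝ)..1, (κ + (r x)^2) * (w x)^2 with hR
  have hBval : (∫ x in (0:ℝ)..1, θ x * u x) = ε * P + lam * Q + R := by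
    rw [key, split, ibp1, ibp2, ibp3]; ring
  have hPnn : 0 ≤ P := intervalIntegral.integral_nonneg zero_le_one (fun x _ => sq_nonneg _)
  have hQnn : 0 ≤ Q := intervalIntegral.integral_nonneg zero_le_one (fun x _ => sq_nonneg _)
  have hRnn : 0 ≤ R := by
    apply intervalIntegral.integral_nonneg zero_le_one
    intro x _
    have : 0 ≤ κ + (r x)^2 := by positivity
    positivity
  have hBnn : 0 ≤ ∫ x in (0:ℝ)..1, θ x * u x := by
    rw [hBval]
    have := mul_nonneg hε.le hPnn
    have := mul_nonneg hlam hQnn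
    linarith
  -- constants
  have hMκ : (0:ℝ) < M^2 + κ := by positivity
  set c : ℝ := M^2 / (M^2 + κ) with hc
  have hcnn : 0 ≤ c := by positivity
  set A := ∫ x in (0:ℝ)..1, (θ x)^2 with hA
  set Bv := ∫ x in (0:ℝ)..1, θ x * u x with hBv
  set f : ℝ → ℝ := fun x => r x * w x with hf
  have cf : Continuous f := hρx.mul cw
  set Cv := ∫ x in (0:ℝ)..1, (f x)^2 with hCv
  -- Cv ≤ c * R
  have hCR : Cv ≤ c * R := by
    have : Cv ≤ ∫ x in (0:ℝ)..1, c * ((κ + (r x)^2) * (w x)^2) := by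
      apply intervalIntegral.integral_mono_on zero_le_one
        (ii _ (cf.pow 2))
        (ii _ (continuous_const.mul ((continuous_const.add (hρx.pow 2)).mul (cw.pow 2))))
      intro x hx
      have h1 : (r x)^2 ≤ M^2 := by
        have := (hbnd x hx).2
        nlinarith [abs_nonneg (r x), sq_abs (r x)]
      have h2 : (r x)^2 * (M^2 + κ) ≤ M^2 * (κ + (r x)^2) := by nlinarith
      have h3 : (r x * w x)^2 ≤ c * ((κ + (r x)^2) * (w x)^2) := by
        rw [hc, div_mul_eq_mul_div, le_div_iff₀ hMκ]
        nlinarith [mul_le_mul_of_nonneg_right h2 (sq_nonneg (w x))]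
      simpa [hf] using h3
    calc Cv ≤ ∫ x in (0:ℝ)..1, c * ((κ + (r x)^2) * (w x)^2) := this
      _ = c * R := by rw [intervalIntegral.integral_const_mul]
  have hRB : R ≤ Bv := by
    rw [hBval]
    have := mul_nonneg hε.le hPnn
    have := mul_nonneg hlam hQnn
    linarith
  have hCB : Cv ≤ c * Bv := le_trans hCR (by nlinarith)
  -- integrability on Ioo
  have intθ2 : IntegrableOn (fun x => (θ x)^2) (Ioo (0:ℝ) 1) volume := hθ.integrable_sq
  have intf2 : IntegrableOn (fun x => (f x)^2) (Ioo (0:ℝ) 1) volume :=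
    ((cf.pow 2).integrableOn_Icc.mono_set Ioo_subset_Icc_self)
  have intθf : IntegrableOn (fun x => θ x * f x) (Ioo (0:ℝ) 1) volume := by
    refine Integrable.mono' (g := fun x => (θ x ^ 2 + f x ^ 2) / 2)
      ?_ (hθ.aestronglyMeasurable.mul cf.aestronglyMeasurable) (ae_of_all _ fun x => ?_)
    · exact (intθ2.add intf2).div_const 2
    · rw [Real.norm_eq_abs, abs_mul]
      nlinarith [sq_nonneg (|θ x| - |f x|), abs_nonneg (θ x), abs_nonneg (f x),
        sq_abs (θ x), sq_abs (f x)]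
  -- A, Bv, Cv as set integrals
  have hAset : A = ∫ x in Ioo (0:ℝ) 1, (θ x)^2 := conv _
  have hCset : Cv = ∫ x in Ioo (0:ℝ) 1, (f x)^2 := conv _
  have hBset : Bv = ∫ x in Ioo (0:ℝ) 1, θ x * f x := by
    rw [hBv, conv (fun x => θ x * u x)]
    apply setIntegral_congr_fun measurableSet_Ioo
    intro x hx
    have hrx : r x ≠ 0 := rne x (Ioo_subset_Icc_self hx)
    simp only [hf, hwdef]
    field_simp
  -- Cauchy–Schwarz via discriminant
  have hCS : Bv^2 ≤ A * Cv := by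
    have hquad : ∀ t : ℝ, 0 ≤ Cv * (t * t) + (-2 * Bv) * t + A := by
      intro t
      have hnn : 0 ≤ ∫ x in Ioo (0:ℝ) 1, (θ x - t * f x)^2 :=
        setIntegral_nonneg measurableSet_Ioo (fun x _ => sq_nonneg _)
      have i1 : Integrable (fun x => (2*t) * (θ x * f x)) (volume.restrict (Ioo (0:ℝ) 1)) :=
        intθf.const_mul _
      have i2 : Integrable (fun x => t^2 * (f x)^2) (volume.restrict (Ioo (0:ℝ) 1)) :=
        intf2.const_mul _
      have i3 : Integrable (fun x => (θ x)^2 - (2*t) * (θ x * f x))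
          (volume.restrict (Ioo (0:ℝ) 1)) := intθ2.sub i1
      have hexp : (∫ x in Ioo (0:ℝ) 1, (θ x - t * f x)^2)
          = A - 2 * t * Bv + t^2 * Cv := by
        have e0 : (∫ x in Ioo (0:ℝ) 1, (θ x - t * f x)^2)
            = ∫ x in Ioo (0:ℝ) 1, ((θ x)^2 - (2*t) * (θ x * f x) + t^2 * (f x)^2) :=
          integral_congr_ae (ae_of_all _ fun x => by ring)
        rw [e0, integral_add i3 i2, integral_sub intθ2 i1,
          MeasureTheory.integral_const_mul, MeasureTheory.integral_const_mul,
          ← hAset, ← hBset, ← hCset]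
      rw [hexp] at hnn
      nlinarith
    have := discrim_le_zero hquad
    rw [discrim] at this
    nlinarith
  have hAnn : 0 ≤ A := intervalIntegral.integral_nonneg zero_le_one (fun x _ => sq_nonneg _)
  -- second claim
  have hmain : Bv ≤ c * A := by
    rcases eq_or_lt_of_le hBnn with h0 | hpos
    · rw [← h0]; exact mul_nonneg hcnn hAnn
    · nlinarith
  refine ⟨hBnn, hmain, ?_⟩
  intro hne
  have hApos : 0 < A := by
    rcases eq_or_lt_of_le hAnn with h0 | h; swap; · exact h
    exfalso
    apply hne
    have h00 : (∫ x in Ioo (0:ℝ) 1, (θ x)^2) = 0 := by rw [← hAset, ← h0]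
    have := (integral_eq_zero_iff_of_nonneg (fun x => sq_nonneg (θ x)) intθ2).1 h00
    filter_upwards [this] with x hx
    have : (θ x)^2 = 0 := hx
    exact pow_eq_zero_iff (by norm_num) |>.1 this
  have hone : 1 - c = κ / (M^2 + κ) := by
    rw [hc]; field_simp; ring
  constructor
  · have : κ / (M^2 + κ) * A = A - c * A := by rw [← hone]; ring
    rw [this]
    linarith
  · have h1 : 0 < κ / (M^2 + κ) * A := by positivity
    have : κ / (M^2 + κ) * A = A - c * A := by rw [← hone]; ring
    nlinarith
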